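/- arXiv:2111.07315 — 2 statements merged into one kernel-verified Lean document; each statement's English description precedes it below -/
import Mathlib

section
/- (Douglas factorization, range inclusion direction) Let H, H₁, H₂ be Hilbert spaces and T₁ ∈ B(H₁, H), T₂ ∈ B(H₂, H). If there exists λ ≥ 0 with T₁T₁* ≤ λ²T₂T₂*, then Range(T₁) ⊆ Range(T₂). -/
open ComplexOrder

set_option maxHeartbeats 1000000 in
/-- Douglas factorization, range inclusion direction:
`T₁T₁* ≤ λ²T₂T₂*` for some `λ ≥ 0` implies `Range(T₁) ⊆ Range(T₂)`. -/
theorem stmt_4 {H H1 H2 : Type*}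
    [NormedAddCommGroup H] [InnerProductSpace ℂ H] [CompleteSpace H]
    [NormedAddCommGroup H1] [InnerProductSpace ℂ H1] [CompleteSpace H1]
    [NormedAddCommGroup H2] [InnerProductSpace ℂ H2] [CompleteSpace H2]
    (T1 : H1 →L[ℂ] H) (T2 : H2 →L[ℂ] H)
    (h : ∃ lam : ℝ, 0 ≤ lam ∧ ∀ f : H,
      (0 : ℂ) ≤ inner ℂ ((((lam ^ 2 : ℝ) : ℂ) • (T2 ∘L T2.adjoint) - T1 ∘L T1.adjoint) f) f) :
    Set.range T1 ⊆ Set.range T2 := by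
  obtain ⟨lam, hlam, hineq⟩ := h
  -- Key norm inequality: ‖T1* f‖ ≤ lam * ‖T2* f‖
  have key : ∀ f : H, ‖T1.adjoint f‖ ≤ lam * ‖T2.adjoint f‖ := by
    intro f
    have h1 := hineq f
    have e1 : inner ℂ ((((lam ^ 2 : ℝ) : ℂ) • (T2 ∘L T2.adjoint) - T1 ∘L T1.adjoint) f) f
        = (((lam ^ 2 * ‖T2.adjoint f‖ ^ 2 - ‖T1.adjoint f‖ ^ 2 : ℝ)) : ℂ) := by
      simp only [ContinuousLinearMap.sub_apply, ContinuousLinearMap.smul_apply,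
        ContinuousLinearMap.comp_apply, inner_sub_left, inner_smul_left]
      rw [← ContinuousLinearMap.adjoint_inner_right T2, ← ContinuousLinearMap.adjoint_inner_right T1,
        inner_self_eq_norm_sq_to_K, inner_self_eq_norm_sq_to_K, Complex.conj_ofReal]
      simp only [show ∀ r : ℝ, @RCLike.ofReal ℂ _ r = Complex.ofReal r from fun _ => rfl]
      push_cast
      ring
    rw [e1] at h1
    have h2 : (0 : ℝ) ≤ lam ^ 2 * ‖T2.adjoint f‖ ^ 2 - ‖T1.adjoint f‖ ^ 2 := by
      exact_mod_cast h1
    nlinarith [norm_nonneg (T1.adjoint f), norm_nonneg (T2.adjoint f),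
      mul_nonneg hlam (norm_nonneg (T2.adjoint f)),
      sq_nonneg (‖T1.adjoint f‖ - lam * ‖T2.adjoint f‖),
      sq_nonneg (‖T1.adjoint f‖ + lam * ‖T2.adjoint f‖)]
  intro y hy
  obtain ⟨x, rfl⟩ := hy
  -- The functional φ : H → ℂ, f ↦ ⟨x, T1* f⟩
  set φ : H →L[ℂ] ℂ := (innerSL ℂ x).comp T1.adjoint with hφ
  have hker : LinearMap.ker (T2.adjoint : H →ₗ[ℂ] H2) ≤ LinearMap.ker (φ : H →ₗ[ℂ] ℂ) := by
    intro f hf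
    have hf' : T2.adjoint f = 0 := hf
    have : ‖T1.adjoint f‖ ≤ lam * ‖T2.adjoint f‖ := key f
    rw [hf', norm_zero, mul_zero] at this
    have hT1 : T1.adjoint f = 0 := norm_le_zero_iff.mp this
    show φ f = 0
    simp [hφ, hT1]
  -- factor through the range of T2*
  set ψ : (LinearMap.range (T2.adjoint : H →ₗ[ℂ] H2)) →ₗ[ℂ] ℂ :=
    ((LinearMap.ker (T2.adjoint : H →ₗ[ℂ] H2)).liftQ (φ : H →ₗ[ℂ] ℂ) hker).comp
      (T2.adjoint : H →ₗ[ℂ] H2).quotKerEquivRange.symm.toLinearMap with hψ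
  have hψ_apply : ∀ (f : H) (hf : (T2.adjoint : H →ₗ[ℂ] H2) f ∈ LinearMap.range (T2.adjoint : H →ₗ[ℂ] H2)),
      ψ ⟨(T2.adjoint : H →ₗ[ℂ] H2) f, hf⟩ = φ f := by
    intro f hf
    simp only [hψ, LinearMap.comp_apply, LinearEquiv.coe_toLinearMap]
    have h5 : (⟨(T2.adjoint : H →ₗ[ℂ] H2) f, hf⟩ : LinearMap.range (T2.adjoint : H →ₗ[ℂ] H2))
        = ⟨(T2.adjoint : H →ₗ[ℂ] H2) f, LinearMap.mem_range_self _ f⟩ := rfl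
    rw [h5, LinearMap.quotKerEquivRange_symm_apply_image]
    simp
  have hbound : ∀ u : (LinearMap.range (T2.adjoint : H →ₗ[ℂ] H2)),
      ‖ψ u‖ ≤ (lam * ‖x‖) * ‖u‖ := by
    rintro ⟨u, hu⟩
    obtain ⟨f, rfl⟩ := hu
    rw [hψ_apply f ⟨f, rfl⟩]
    have hnu : ‖(⟨(T2.adjoint : H →ₗ[ℂ] H2) f, ⟨f, rfl⟩⟩ :
        (LinearMap.range (T2.adjoint : H →ₗ[ℂ] H2)))‖ = ‖T2.adjoint f‖ := rfl
    rw [hnu]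
    have h7 : ‖φ f‖ ≤ ‖x‖ * ‖T1.adjoint f‖ := by
      simpa [hφ] using norm_inner_le_norm (𝕜 := ℂ) x (T1.adjoint f)
    calc ‖φ f‖ ≤ ‖x‖ * ‖T1.adjoint f‖ := h7
      _ ≤ ‖x‖ * (lam * ‖T2.adjoint f‖) := by
          exact mul_le_mul_of_nonneg_left (key f) (norm_nonneg x)
      _ = (lam * ‖x‖) * ‖T2.adjoint f‖ := by ring
  set ψc : (LinearMap.range (T2.adjoint : H →ₗ[ℂ] H2)) →L[ℂ] ℂ :=
    LinearMap.mkContinuous ψ (lam * ‖x‖) hbound with hψc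
  obtain ⟨g, hg, -⟩ := exists_extension_norm_eq
    (LinearMap.range (T2.adjoint : H →ₗ[ℂ] H2)) ψc
  set z : H2 := (InnerProductSpace.toDual ℂ H2).symm g with hz
  refine ⟨z, ?_⟩
  refine ext_inner_right ℂ (fun f => ?_)
  have h1 : (inner ℂ (T2 z) f : ℂ) = inner ℂ z (T2.adjoint f) := by
    rw [ContinuousLinearMap.adjoint_inner_right]
  have h2 : (inner ℂ z (T2.adjoint f) : ℂ) = g (T2.adjoint f) := by
    rw [hz, InnerProductSpace.toDual_symm_apply]
  have h3 : g (T2.adjoint f) = φ f := by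
    have hmem : (T2.adjoint : H →ₗ[ℂ] H2) f ∈ LinearMap.range (T2.adjoint : H →ₗ[ℂ] H2) :=
      ⟨f, rfl⟩
    have h9 := hg ⟨(T2.adjoint : H →ₗ[ℂ] H2) f, hmem⟩
    rw [show ψc ⟨(T2.adjoint : H →ₗ[ℂ] H2) f, hmem⟩
        = ψ ⟨(T2.adjoint : H →ₗ[ℂ] H2) f, hmem⟩ from rfl, hψ_apply f hmem] at h9
    exact h9
  have h4 : φ f = (inner ℂ (T1 x) f : ℂ) := by
    simp only [hφ, ContinuousLinearMap.comp_apply, innerSL_apply_apply]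
    rw [ContinuousLinearMap.adjoint_inner_right]
  exact h1.trans (h2.trans (h3.trans h4))
end

section
/- Let K ∈ B(L²(ℝ^d)), and suppose {E_{C_m}}_{m∈ℤ} is a frame for L²([−a,a]^d) with bounds A₁, B₁, and g ∈ L²(ℝ^d) is bounded with support in [−a,a]^d satisfying A‖K‖² ≤ Σ_{n∈ℤ^d}|g(t−Bn)|² ≤ B‖K‖⁻² a.e. for constants A, B > 0 and B ∈ GL_d(ℝ). Then {E_{C_m}T_{Bn}g}_{m∈ℤ, n∈ℤ^d} is a K-Weyl-Heisenberg frame for L²(ℝ^d) with bounds A₁A and B₁B‖K‖⁻². -/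
open MeasureTheory

/-- The Gabor (Weyl–Heisenberg) system element `E_C T_b g`. -/
noncomputable def gaborFn {d : ℕ} (C b : EuclideanSpace ℝ (Fin d))
    (g : EuclideanSpace ℝ (Fin d) → ℂ) : EuclideanSpace ℝ (Fin d) → ℂ :=
  fun t => Complex.exp (2 * Real.pi * Complex.I * ((inner ℝ C t : ℝ) : ℂ)) * g (t - b)

/-- The pure modulation `E_C`. -/
noncomputable def eFun {d : ℕ} (Cm : EuclideanSpace ℝ (Fin d)) :
    EuclideanSpace ℝ (Fin d) → ℂ :=
  fun t => Complex.exp (2 * Real.pi * Complex.I * ((inner ℝ Cm t : ℝ) : ℂ))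

lemma eFun_norm {d : ℕ} (Cm t : EuclideanSpace ℝ (Fin d)) : ‖eFun Cm t‖ = 1 := by
  rw [eFun, Complex.norm_exp]
  have : (2 * Real.pi * Complex.I * (((inner ℝ Cm t : ℝ)) : ℂ)).re = 0 := by simp
  rw [this, Real.exp_zero]

lemma eFun_add {d : ℕ} (Cm x y : EuclideanSpace ℝ (Fin d)) :
    eFun Cm (x + y) = eFun Cm x * eFun Cm y := by
  simp only [eFun]
  rw [← Complex.exp_add]
  congr 1
  rw [inner_add_right]
  push_cast
  ring

lemma coord_le_norm {d : ℕ} (x : EuclideanSpace ℝ (Fin d)) (i : Fin d) : ‖x i‖ ≤ ‖x‖ := by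
  rw [EuclideanSpace.norm_eq]
  have h : ‖x i‖ ^ 2 ≤ ∑ j, ‖x j‖ ^ 2 :=
    Finset.single_le_sum (f := fun j => ‖x j‖ ^ 2) (fun j _ => sq_nonneg _) (Finset.mem_univ i)
  calc ‖x i‖ = Real.sqrt (‖x i‖ ^ 2) := (Real.sqrt_sq (norm_nonneg _)).symm
    _ ≤ _ := Real.sqrt_le_sqrt h

lemma sq_integrable {d : ℕ} {X : EuclideanSpace ℝ (Fin d) → ℂ}
    (h : MemLp X 2 (volume : Measure (EuclideanSpace ℝ (Fin d)))) :
    Integrable (fun t => ‖X t‖ ^ 2) (volume : Measure (EuclideanSpace ℝ (Fin d))) := by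
  have := h.integrable_norm_rpow (by norm_num) (by norm_num)
  refine this.congr (Filter.Eventually.of_forall fun t => ?_)
  show ‖X t‖ ^ ((2:ENNReal)).toReal = ‖X t‖ ^ 2
  rw [ENNReal.toReal_ofNat, Real.rpow_two]

/-- change of variables for Gabor coefficients -/
lemma coeff_eq {d : ℕ} (Cm bn : EuclideanSpace ℝ (Fin d))
    (F g : EuclideanSpace ℝ (Fin d) → ℂ) :
    ‖∫ t, F t * (starRingEnd ℂ) (gaborFn Cm bn g t)‖
      = ‖∫ s, (F (s + bn) * (starRingEnd ℂ) (g s)) * (starRingEnd ℂ) (eFun Cm s)‖ := by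
  have h1 : ∫ t, F t * (starRingEnd ℂ) (gaborFn Cm bn g t)
      = ∫ s, F (s + bn) * (starRingEnd ℂ) (gaborFn Cm bn g (s + bn)) :=
    (integral_add_right_eq_self (fun t => F t * (starRingEnd ℂ) (gaborFn Cm bn g t)) bn).symm
  have h2 : (fun s => F (s + bn) * (starRingEnd ℂ) (gaborFn Cm bn g (s + bn)))
      = fun s => (F (s + bn) * (starRingEnd ℂ) (g s)) * (starRingEnd ℂ) (eFun Cm s)
          * (starRingEnd ℂ) (eFun Cm bn) := by
    funext s
    have : gaborFn Cm bn g (s + bn) = (eFun Cm s * eFun Cm bn) * g s := by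
      rw [gaborFn, add_sub_cancel_right, ← eFun_add]; rfl
    rw [this, map_mul, map_mul]
    ring
  rw [h1, h2, integral_mul_const, norm_mul, RCLike.norm_conj, eFun_norm, mul_one]

lemma norm_sq_eq_integral {d : ℕ}
    (f : Lp ℂ 2 (volume : Measure (EuclideanSpace ℝ (Fin d)))) :
    ‖f‖ ^ 2 = ∫ t, ‖(f : EuclideanSpace ℝ (Fin d) → ℂ) t‖ ^ 2 := by
  have h1 : (‖f‖ : ℝ) ^ 2 = RCLike.re (inner (𝕜 := ℂ) f f) := by
    rw [← inner_self_eq_norm_sq (𝕜 := ℂ)]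
  rw [h1, L2.inner_def, ← integral_re (L2.integrable_inner f f)]
  congr 1; ext t
  rw [← inner_self_eq_norm_sq (𝕜 := ℂ) ((f : EuclideanSpace ℝ (Fin d) → ℂ) t)]

lemma support_finite {d : ℕ} {a : ℝ}
    (Bmat : EuclideanSpace ℝ (Fin d) ≃L[ℝ] EuclideanSpace ℝ (Fin d))
    (g : EuclideanSpace ℝ (Fin d) → ℂ)
    (hgsupp : ∀ t : EuclideanSpace ℝ (Fin d), (∃ i, t i ∉ Set.Icc (-a) a) → g t = 0)
    (t : EuclideanSpace ℝ (Fin d)) :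
    (Function.support fun n : Fin d → ℤ =>
      ‖g (t - Bmat (WithLp.toLp 2 (fun i => (n i : ℝ))))‖ ^ 2).Finite := by
  set R := ‖(Bmat.symm : EuclideanSpace ℝ (Fin d) →L[ℝ] EuclideanSpace ℝ (Fin d))‖ *
      (‖t‖ + Real.sqrt (d * a ^ 2)) with hRdef
  refine Set.Finite.subset
    (Set.Finite.pi (t := fun _ : Fin d => (Set.Icc (-⌈R⌉) ⌈R⌉ : Set ℤ))
      (fun _ => Set.finite_Icc _ _)) ?_
  intro n hn
  set bn : EuclideanSpace ℝ (Fin d) := Bmat (WithLp.toLp 2 (fun i => (n i : ℝ))) with hbn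
  have hg0 : g (t - bn) ≠ 0 := by
    intro h0
    apply hn
    simp only [Function.mem_support, ne_eq, not_not, ← hbn, h0, norm_zero]
    norm_num
  have hco : ∀ i, (t - bn) i ∈ Set.Icc (-a) a := by
    intro i
    by_contra hc
    exact hg0 (hgsupp _ ⟨i, hc⟩)
  have hnorm1 : ‖t - bn‖ ≤ Real.sqrt (d * a ^ 2) := by
    rw [EuclideanSpace.norm_eq]
    apply Real.sqrt_le_sqrt
    calc ∑ i, ‖(t - bn) i‖ ^ 2 ≤ ∑ _i : Fin d, a ^ 2 := by
          refine Finset.sum_le_sum fun i _ => ?_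
          have h := hco i
          have habs : |(t - bn) i| ≤ a := abs_le.mpr ⟨h.1, h.2⟩
          calc ‖(t - bn) i‖ ^ 2 = |(t - bn) i| ^ 2 := by rw [Real.norm_eq_abs]
            _ ≤ a ^ 2 := by
                have : (0:ℝ) ≤ |(t - bn) i| := abs_nonneg _
                nlinarith
      _ = d * a ^ 2 := by simp [Finset.sum_const, nsmul_eq_mul]
  have hbnle : ‖bn‖ ≤ ‖t‖ + Real.sqrt (d * a ^ 2) := by
    have h1 : bn = t - (t - bn) := by abel
    calc ‖bn‖ = ‖t - (t - bn)‖ := by rw [← h1]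
      _ ≤ ‖t‖ + ‖t - bn‖ := norm_sub_le _ _
      _ ≤ _ := by linarith
  have hni : ∀ i, |(n i : ℝ)| ≤ R := by
    intro i
    have h1 : (Bmat.symm bn : EuclideanSpace ℝ (Fin d)) = WithLp.toLp 2 (fun i => (n i : ℝ)) := by
      rw [hbn, ContinuousLinearEquiv.symm_apply_apply]
    have h2 : ‖(Bmat.symm bn : EuclideanSpace ℝ (Fin d))‖ ≤ R := by
      calc ‖(Bmat.symm bn : EuclideanSpace ℝ (Fin d))‖
          ≤ ‖(Bmat.symm : EuclideanSpace ℝ (Fin d) →L[ℝ] EuclideanSpace ℝ (Fin d))‖ * ‖bn‖ :=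
            (Bmat.symm : EuclideanSpace ℝ (Fin d) →L[ℝ] EuclideanSpace ℝ (Fin d)).le_opNorm _
        _ ≤ R := by
            rw [hRdef]
            exact mul_le_mul_of_nonneg_left hbnle (norm_nonneg _)
    have h3 : ‖(Bmat.symm bn : EuclideanSpace ℝ (Fin d)) i‖
        ≤ ‖(Bmat.symm bn : EuclideanSpace ℝ (Fin d))‖ := coord_le_norm _ i
    rw [h1] at h3 h2
    simp only [Real.norm_eq_abs, PiLp.toLp_apply] at h3
    exact h3.trans h2
  intro i _
  have h := hni i
  have h1 : ((-⌈R⌉ : ℤ) : ℝ) ≤ (n i : ℝ) := by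
    have := (abs_le.mp h).1
    have h2 : R ≤ (⌈R⌉ : ℝ) := Int.le_ceil R
    push_cast
    linarith
  have h2 : ((n i : ℤ) : ℝ) ≤ ((⌈R⌉ : ℤ) : ℝ) := by
    have := (abs_le.mp h).2
    have h2 : R ≤ (⌈R⌉ : ℝ) := Int.le_ceil R
    push_cast
    linarith
  exact Set.mem_Icc.mpr ⟨by exact_mod_cast h1, by exact_mod_cast h2⟩
set_option maxHeartbeats 2000000 in
/-- sufficient conditions for `{E_{C_m}T_{Bn}g}` to be a
`K`-Weyl–Heisenberg frame for `L²(ℝ^d)` with bounds `A₁A`, `B₁B‖K‖⁻²`. -/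
theorem stmt_9 {d : ℕ}
    (K : Lp ℂ 2 (volume : Measure (EuclideanSpace ℝ (Fin d))) →L[ℂ]
         Lp ℂ 2 (volume : Measure (EuclideanSpace ℝ (Fin d))))
    (a : ℝ) (ha : 0 < a) (C : ℤ → EuclideanSpace ℝ (Fin d))
    (Bmat : EuclideanSpace ℝ (Fin d) ≃L[ℝ] EuclideanSpace ℝ (Fin d))
    (g : EuclideanSpace ℝ (Fin d) → ℂ) (A B A1 B1 : ℝ)
    (hA : 0 < A) (hB : 0 < B) (hA1 : 0 < A1) (hB1 : 0 < B1)
    (hgmem : MemLp g 2 (volume : Measure (EuclideanSpace ℝ (Fin d))))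
    (hgbdd : ∃ M : ℝ, ∀ t, ‖g t‖ ≤ M)
    (hgsupp : ∀ t : EuclideanSpace ℝ (Fin d), (∃ i, t i ∉ Set.Icc (-a) a) → g t = 0)
    -- `{E_{C_m}}` is a frame for `L²([-a,a]^d)` with bounds `A₁, B₁`
    (hframe : ∀ h : EuclideanSpace ℝ (Fin d) → ℂ,
      MemLp h 2 (volume : Measure (EuclideanSpace ℝ (Fin d))) →
      (∀ t : EuclideanSpace ℝ (Fin d), (∃ i, t i ∉ Set.Icc (-a) a) → h t = 0) →
      A1 * ∫ t, ‖h t‖ ^ 2 ≤ (∑' m : ℤ, ‖∫ t, h t * (starRingEnd ℂ)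
          (Complex.exp (2 * Real.pi * Complex.I * ((inner ℝ (C m) t : ℝ) : ℂ)))‖ ^ 2) ∧
      (∑' m : ℤ, ‖∫ t, h t * (starRingEnd ℂ)
          (Complex.exp (2 * Real.pi * Complex.I * ((inner ℝ (C m) t : ℝ) : ℂ)))‖ ^ 2)
        ≤ B1 * ∫ t, ‖h t‖ ^ 2)
    -- `A‖K‖² ≤ Σ_n |g(t − Bn)|² ≤ B‖K‖⁻²` a.e.
    (hg : ∀ᵐ t : EuclideanSpace ℝ (Fin d) ∂volume,
      A * ‖K‖ ^ 2 ≤ (∑' n : Fin d → ℤ, ‖g (t - Bmat (WithLp.toLp 2 (fun i => (n i : ℝ))))‖ ^ 2) ∧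
      (∑' n : Fin d → ℤ, ‖g (t - Bmat (WithLp.toLp 2 (fun i => (n i : ℝ))))‖ ^ 2) ≤ B * ‖K‖⁻¹ ^ 2) :
    ∀ f : Lp ℂ 2 (volume : Measure (EuclideanSpace ℝ (Fin d))),
      A1 * A * ‖K.adjoint f‖ ^ 2 ≤ (∑' p : ℤ × (Fin d → ℤ),
          ‖∫ t, f t * (starRingEnd ℂ)
            (gaborFn (C p.1) (Bmat (WithLp.toLp 2 (fun i => ((p.2 i : ℝ))))) g t)‖ ^ 2) ∧
      (∑' p : ℤ × (Fin d → ℤ),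
          ‖∫ t, f t * (starRingEnd ℂ)
            (gaborFn (C p.1) (Bmat (WithLp.toLp 2 (fun i => ((p.2 i : ℝ))))) g t)‖ ^ 2)
        ≤ B1 * B * ‖K‖⁻¹ ^ 2 * ‖f‖ ^ 2 := by
  intro f
  classical
  obtain ⟨M0, hM0⟩ := hgbdd
  have hM0nn : 0 ≤ M0 := le_trans (norm_nonneg (g 0)) (hM0 0)
  set F : EuclideanSpace ℝ (Fin d) → ℂ := ↑↑f with hFdef
  set b : (Fin d → ℤ) → EuclideanSpace ℝ (Fin d) :=
    fun n => Bmat (WithLp.toLp 2 (fun i => (n i : ℝ))) with hbdef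
  set I : (Fin d → ℤ) → ℝ :=
    fun n => ∫ t, ‖F t‖ ^ 2 * ‖g (t - b n)‖ ^ 2 with hIdef
  set S : (Fin d → ℤ) → ℝ :=
    fun n => ∑' m : ℤ, ‖∫ s, (F (s + b n) * (starRingEnd ℂ) (g s)) * (starRingEnd ℂ)
      (Complex.exp (2 * Real.pi * Complex.I * ((inner ℝ (C m) s : ℝ) : ℂ)))‖ ^ 2 with hSdef
  have hgm : AEStronglyMeasurable g volume := hgmem.aestronglyMeasurable
  have hFm : AEStronglyMeasurable F volume := Lp.aestronglyMeasurable f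
  -- membership of the localized pieces
  have hmem : ∀ n, MemLp (fun s => F (s + b n) * (starRingEnd ℂ) (g s)) 2 volume := by
    intro n
    have h1 : MemLp (fun s => F (s + b n)) 2 volume :=
      (Lp.memLp f).comp_measurePreserving (measurePreserving_add_right volume _)
    refine MemLp.of_le_mul (c := M0) h1 ?_ (Filter.Eventually.of_forall fun s => ?_)
    · exact (hFm.comp_quasiMeasurePreserving
        (measurePreserving_add_right volume (b n)).quasiMeasurePreserving).mul
        (Complex.continuous_conj.comp_aestronglyMeasurable hgm)
    · rw [norm_mul, RCLike.norm_conj, mul_comm M0]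
      exact mul_le_mul_of_nonneg_left (hM0 s) (norm_nonneg _)
  have hsupp : ∀ n, ∀ t : EuclideanSpace ℝ (Fin d), (∃ i, t i ∉ Set.Icc (-a) a) →
      F (t + b n) * (starRingEnd ℂ) (g t) = 0 := by
    intro n t ht
    rw [hgsupp t ht, map_zero, mul_zero]
  have hintF : Integrable (fun t => ‖F t‖ ^ 2) volume := sq_integrable (Lp.memLp f)
  have hgtm : ∀ n, AEStronglyMeasurable (fun t => g (t - b n)) volume :=
    fun n => hgm.comp_quasiMeasurePreserving
      (measurePreserving_sub_right volume (b n)).quasiMeasurePreserving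
  have hinteg : ∀ n, Integrable (fun t => ‖F t‖ ^ 2 * ‖g (t - b n)‖ ^ 2) volume := by
    intro n
    refine Integrable.mono' (hintF.const_mul (M0 ^ 2)) ?_
      (Filter.Eventually.of_forall fun t => ?_)
    · exact ((continuous_pow 2).comp_aestronglyMeasurable hFm.norm).mul
        ((continuous_pow 2).comp_aestronglyMeasurable (hgtm n).norm)
    · have h1 : ‖g (t - b n)‖ ^ 2 ≤ M0 ^ 2 :=
        pow_le_pow_left₀ (norm_nonneg _) (hM0 _) 2
      have h2 : (0:ℝ) ≤ ‖F t‖ ^ 2 := sq_nonneg _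
      rw [Real.norm_eq_abs, abs_of_nonneg (by positivity)]
      calc ‖F t‖ ^ 2 * ‖g (t - b n)‖ ^ 2 ≤ ‖F t‖ ^ 2 * M0 ^ 2 :=
            mul_le_mul_of_nonneg_left h1 h2
        _ = M0 ^ 2 * ‖F t‖ ^ 2 := by ring
  have hInn : ∀ n, 0 ≤ I n := fun n => integral_nonneg fun t => by positivity
  -- change of variables for the L² norms
  have hI_eq : ∀ n, ∫ s, ‖F (s + b n) * (starRingEnd ℂ) (g s)‖ ^ 2 = I n := by
    intro n
    have h3 : ∫ s, ‖F (s + b n)‖ ^ 2 * ‖g (s + b n - b n)‖ ^ 2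
        = ∫ t, ‖F t‖ ^ 2 * ‖g (t - b n)‖ ^ 2 :=
      integral_add_right_eq_self (fun t => ‖F t‖ ^ 2 * ‖g (t - b n)‖ ^ 2) (b n)
    simp only [add_sub_cancel_right] at h3
    simp only [hIdef]
    rw [← h3]
    congr 1
    funext s
    simp [norm_mul, RCLike.norm_conj, mul_pow]
  -- frame inequality applied to each localized piece
  have hframe2 : ∀ n, A1 * I n ≤ S n ∧ S n ≤ B1 * I n := by
    intro n
    have h := hframe (fun s => F (s + b n) * (starRingEnd ℂ) (g s)) (hmem n) (hsupp n)
    rwa [hI_eq n] at h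
  -- summability in m for each fixed n
  have hSm : ∀ n, Summable (fun m : ℤ =>
      ‖∫ s, (F (s + b n) * (starRingEnd ℂ) (g s)) * (starRingEnd ℂ)
        (Complex.exp (2 * Real.pi * Complex.I * ((inner ℝ (C m) s : ℝ) : ℂ)))‖ ^ 2) := by
    intro n
    by_contra hns
    have h0 : S n = 0 := tsum_eq_zero_of_not_summable hns
    have hlow := (hframe2 n).1
    rw [h0] at hlow
    have hint0 : I n = 0 := le_antisymm (by nlinarith [hInn n]) (hInn n)
    have hint0' : ∫ s, ‖F (s + b n) * (starRingEnd ℂ) (g s)‖ ^ 2 = 0 := by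
      rw [hI_eq n]; exact hint0
    have hhz : (fun s => ‖F (s + b n) * (starRingEnd ℂ) (g s)‖ ^ 2) =ᵐ[volume] 0 :=
      (integral_eq_zero_iff_of_nonneg (fun s => sq_nonneg _)
        (sq_integrable (hmem n))).mp hint0'
    have hcz : ∀ m : ℤ, ∫ s, (F (s + b n) * (starRingEnd ℂ) (g s)) * (starRingEnd ℂ)
        (Complex.exp (2 * Real.pi * Complex.I * ((inner ℝ (C m) s : ℝ) : ℂ))) = 0 := by
      intro m
      rw [integral_eq_zero_of_ae]
      filter_upwards [hhz] with s hs
      have : F (s + b n) * (starRingEnd ℂ) (g s) = 0 := by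
        have := hs
        simp only [Pi.zero_apply] at this
        exact norm_eq_zero.mp (by nlinarith [norm_nonneg (F (s + b n) * (starRingEnd ℂ) (g s))])
      simp [this]
    apply hns
    have : (fun m : ℤ => ‖∫ s, (F (s + b n) * (starRingEnd ℂ) (g s)) * (starRingEnd ℂ)
        (Complex.exp (2 * Real.pi * Complex.I * ((inner ℝ (C m) s : ℝ) : ℂ)))‖ ^ 2)
        = fun _ => 0 := by
      funext m; rw [hcz m]; simp
    rw [this]
    exact summable_zero
  -- per-point summability of the g-translates
  have hGsum : ∀ t, Summable (fun n : Fin d → ℤ => ‖g (t - b n)‖ ^ 2) :=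
    fun t => summable_of_finite_support (support_finite Bmat g hgsupp t)
  -- ENNReal bookkeeping for the sum of the I n
  set T : ENNReal := ∑' n : Fin d → ℤ,
    ∫⁻ t, ENNReal.ofReal (‖F t‖ ^ 2 * ‖g (t - b n)‖ ^ 2) with hTdef
  have haem : ∀ n, AEMeasurable (fun t => ENNReal.ofReal (‖F t‖ ^ 2 * ‖g (t - b n)‖ ^ 2))
      volume := fun n =>
    ENNReal.measurable_ofReal.comp_aemeasurable (hinteg n).aestronglyMeasurable.aemeasurable
  have hT1 : T = ∫⁻ t, ∑' n : Fin d → ℤ, ENNReal.ofReal (‖F t‖ ^ 2 * ‖g (t - b n)‖ ^ 2) :=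
    (lintegral_tsum haem).symm
  have hptw : ∀ t, (∑' n : Fin d → ℤ, ENNReal.ofReal (‖F t‖ ^ 2 * ‖g (t - b n)‖ ^ 2))
      = ENNReal.ofReal (‖F t‖ ^ 2) * ENNReal.ofReal (∑' n : Fin d → ℤ, ‖g (t - b n)‖ ^ 2) := by
    intro t
    rw [ENNReal.ofReal_tsum_of_nonneg (fun n => sq_nonneg _) (hGsum t),
      ← ENNReal.tsum_mul_left]
    exact tsum_congr fun n => ENNReal.ofReal_mul (sq_nonneg _)
  have hPhi : ∫⁻ t, ENNReal.ofReal (‖F t‖ ^ 2) = ENNReal.ofReal (∫ t, ‖F t‖ ^ 2) :=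
    (ofReal_integral_eq_lintegral_ofReal hintF
      (Filter.Eventually.of_forall fun t => sq_nonneg _)).symm
  have hTub : T ≤ ENNReal.ofReal (B * ‖K‖⁻¹ ^ 2) * ENNReal.ofReal (∫ t, ‖F t‖ ^ 2) := by
    rw [hT1]
    calc ∫⁻ t, ∑' n : Fin d → ℤ, ENNReal.ofReal (‖F t‖ ^ 2 * ‖g (t - b n)‖ ^ 2)
        ≤ ∫⁻ t, ENNReal.ofReal (B * ‖K‖⁻¹ ^ 2) * ENNReal.ofReal (‖F t‖ ^ 2) := by
          refine lintegral_mono_ae ?_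
          filter_upwards [hg] with t ht
          rw [hptw t, mul_comm]
          exact mul_le_mul_left (ENNReal.ofReal_le_ofReal ht.2) _
      _ = ENNReal.ofReal (B * ‖K‖⁻¹ ^ 2) * ENNReal.ofReal (∫ t, ‖F t‖ ^ 2) := by
          rw [lintegral_const_mul' _ _ ENNReal.ofReal_ne_top, hPhi]
  have hTlb : ENNReal.ofReal (A * ‖K‖ ^ 2) * ENNReal.ofReal (∫ t, ‖F t‖ ^ 2) ≤ T := by
    rw [hT1]
    calc ENNReal.ofReal (A * ‖K‖ ^ 2) * ENNReal.ofReal (∫ t, ‖F t‖ ^ 2)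
        = ∫⁻ t, ENNReal.ofReal (A * ‖K‖ ^ 2) * ENNReal.ofReal (‖F t‖ ^ 2) := by
          rw [lintegral_const_mul' _ _ ENNReal.ofReal_ne_top, hPhi]
      _ ≤ _ := by
          refine lintegral_mono_ae ?_
          filter_upwards [hg] with t ht
          rw [hptw t, mul_comm]
          exact mul_le_mul_right (ENNReal.ofReal_le_ofReal ht.1) _
  have hTne : T ≠ ⊤ :=
    ne_top_of_le_ne_top (ENNReal.mul_ne_top ENNReal.ofReal_ne_top ENNReal.ofReal_ne_top) hTub
  have hTof : ∀ n, ENNReal.ofReal (I n)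
      = ∫⁻ t, ENNReal.ofReal (‖F t‖ ^ 2 * ‖g (t - b n)‖ ^ 2) := fun n =>
    ofReal_integral_eq_lintegral_ofReal (hinteg n)
      (Filter.Eventually.of_forall fun t => by positivity)
  have hT2 : T = ∑' n, ENNReal.ofReal (I n) := by
    rw [hTdef]; exact (tsum_congr fun n => (hTof n).symm)
  have hIsum : Summable I := by
    have h := ENNReal.summable_toReal (by rw [← hT2]; exact hTne)
    refine h.congr fun n => ?_
    rw [ENNReal.toReal_ofReal (hInn n)]
  have hItsum : ∑' n, I n = T.toReal := by
    rw [hT2, ENNReal.tsum_toReal_eq fun n => ENNReal.ofReal_ne_top]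
    exact tsum_congr fun n => (ENNReal.toReal_ofReal (hInn n)).symm
  have hintFnn : 0 ≤ ∫ t, ‖F t‖ ^ 2 := integral_nonneg fun t => sq_nonneg _
  have hIub : ∑' n, I n ≤ B * ‖K‖⁻¹ ^ 2 * ∫ t, ‖F t‖ ^ 2 := by
    rw [hItsum]
    have h := ENNReal.toReal_mono
      (ENNReal.mul_ne_top ENNReal.ofReal_ne_top ENNReal.ofReal_ne_top) hTub
    rwa [ENNReal.toReal_mul, ENNReal.toReal_ofReal (by positivity),
      ENNReal.toReal_ofReal hintFnn] at h
  have hIlb : A * ‖K‖ ^ 2 * ∫ t, ‖F t‖ ^ 2 ≤ ∑' n, I n := by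
    rw [hItsum]
    have h := ENNReal.toReal_mono hTne hTlb
    rwa [ENNReal.toReal_mul, ENNReal.toReal_ofReal (by positivity),
      ENNReal.toReal_ofReal hintFnn] at h
  -- summability of S
  have hSnn : ∀ n, 0 ≤ S n := fun n => tsum_nonneg fun m => sq_nonneg _
  have hSsum : Summable S :=
    Summable.of_nonneg_of_le hSnn (fun n => (hframe2 n).2) (hIsum.mul_left B1)
  -- identify the double sum
  have hcoeff : ∀ (p : ℤ × (Fin d → ℤ)),
      ‖∫ t, F t * (starRingEnd ℂ) (gaborFn (C p.1) (b p.2) g t)‖ ^ 2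
      = ‖∫ s, (F (s + b p.2) * (starRingEnd ℂ) (g s)) * (starRingEnd ℂ)
        (Complex.exp (2 * Real.pi * Complex.I * ((inner ℝ (C p.1) s : ℝ) : ℂ)))‖ ^ 2 := by
    intro p
    rw [coeff_eq (C p.1) (b p.2) F g]
    rfl
  set cc : (Fin d → ℤ) × ℤ → ℝ := fun q =>
    ‖∫ s, (F (s + b q.1) * (starRingEnd ℂ) (g s)) * (starRingEnd ℂ)
      (Complex.exp (2 * Real.pi * Complex.I * ((inner ℝ (C q.2) s : ℝ) : ℂ)))‖ ^ 2 with hccdef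
  have hccsum : Summable cc := by
    rw [summable_prod_of_nonneg (fun q => sq_nonneg _)]
    exact ⟨fun n => hSm n, hSsum⟩
  have hccts : ∑' q, cc q = ∑' n, S n :=
    Summable.tsum_prod' hccsum fun n => hSm n
  have hgoalts : (∑' p : ℤ × (Fin d → ℤ),
      ‖∫ t, F t * (starRingEnd ℂ) (gaborFn (C p.1) (Bmat (WithLp.toLp 2 (fun i => ((p.2 i : ℝ))))) g t)‖ ^ 2)
      = ∑' n, S n := by
    have h1 : (∑' p : ℤ × (Fin d → ℤ),
        ‖∫ t, F t * (starRingEnd ℂ) (gaborFn (C p.1) (Bmat (WithLp.toLp 2 (fun i => ((p.2 i : ℝ))))) g t)‖ ^ 2)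
        = ∑' p : ℤ × (Fin d → ℤ), cc ((Equiv.prodComm ℤ (Fin d → ℤ)) p) := by
      refine tsum_congr fun p => ?_
      have := hcoeff p
      rw [hbdef] at this
      exact this
    rw [h1, Equiv.tsum_eq (Equiv.prodComm ℤ (Fin d → ℤ)) cc, hccts]
  -- opnorm estimate for the adjoint
  have hKf : ‖K.adjoint f‖ ^ 2 ≤ ‖K‖ ^ 2 * ‖f‖ ^ 2 := by
    have h1 : ‖K.adjoint f‖ ≤ ‖K‖ * ‖f‖ := by
      have h2 := (K.adjoint).le_opNorm f
      rwa [ContinuousLinearMap.adjoint.norm_map K] at h2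
    calc ‖K.adjoint f‖ ^ 2 ≤ (‖K‖ * ‖f‖) ^ 2 :=
          pow_le_pow_left₀ (norm_nonneg _) h1 2
      _ = ‖K‖ ^ 2 * ‖f‖ ^ 2 := by ring
  have hfnorm : ‖f‖ ^ 2 = ∫ t, ‖F t‖ ^ 2 := norm_sq_eq_integral f
  constructor
  · rw [hgoalts]
    have h1 : A1 * A * ‖K.adjoint f‖ ^ 2 ≤ A1 * (A * ‖K‖ ^ 2 * ∫ t, ‖F t‖ ^ 2) := by
      have := mul_le_mul_of_nonneg_left hKf (le_of_lt (mul_pos hA1 hA))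
      calc A1 * A * ‖K.adjoint f‖ ^ 2 ≤ A1 * A * (‖K‖ ^ 2 * ‖f‖ ^ 2) := this
        _ = A1 * (A * ‖K‖ ^ 2 * ‖f‖ ^ 2) := by ring
        _ = A1 * (A * ‖K‖ ^ 2 * ∫ t, ‖F t‖ ^ 2) := by rw [hfnorm]
    refine h1.trans ?_
    have h2 : A1 * (A * ‖K‖ ^ 2 * ∫ t, ‖F t‖ ^ 2) ≤ A1 * ∑' n, I n :=
      mul_le_mul_of_nonneg_left hIlb hA1.le
    refine h2.trans ?_
    rw [← tsum_mul_left]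
    exact Summable.tsum_le_tsum (fun n => (hframe2 n).1) (hIsum.mul_left A1) hSsum
  · rw [hgoalts]
    have h1 : ∑' n, S n ≤ B1 * ∑' n, I n := by
      rw [← tsum_mul_left]
      exact Summable.tsum_le_tsum (fun n => (hframe2 n).2) hSsum (hIsum.mul_left B1)
    refine h1.trans ?_
    calc B1 * ∑' n, I n ≤ B1 * (B * ‖K‖⁻¹ ^ 2 * ∫ t, ‖F t‖ ^ 2) :=
          mul_le_mul_of_nonneg_left hIub hB1.le
      _ = B1 * B * ‖K‖⁻¹ ^ 2 * ‖f‖ ^ 2 := by rw [hfnorm]; ring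
end
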